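/- Let δ ∈ (0,1), and let ω : [0,π)² → [0,1] satisfy ω(y) = 1 except on a set of measure at most 4πδ. Let c₀ > 0 and suppose g(y) = y₁y₂|y|^{−4−2α} with α ∈ (0,1). Then there exist universal constants M and c > 0 (depending only on α) such that for all sufficiently small δ, ∫_{[0,π)² \ [0,Mδ^{1/2}]²} g(y) ω(y) dy ≥ c δ^{−α}. -/

import Mathlib

open Real MeasureTheory
set_option maxHeartbeats 1000000

/-- quantitative lower bound of Lemma 2.4. -/
theorem stmt_12 (α : ℝ) (hα : 0 < α) (hα1 : α < 1) :
    ∃ M > 0, ∃ c > 0, ∃ δs > 0, ∀ δ : ℝ, δ ∈ Set.Ioc (0 : ℝ) δs →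
      ∀ ω : ℝ × ℝ → ℝ, Measurable ω →
        (∀ y ∈ Set.Ico (0 : ℝ) π ×ˢ Set.Ico (0 : ℝ) π, 0 ≤ ω y ∧ ω y ≤ 1) →
        volume {y ∈ Set.Ico (0 : ℝ) π ×ˢ Set.Ico (0 : ℝ) π | ω y ≠ 1}
          ≤ ENNReal.ofReal (4 * π * δ) →
        c * δ ^ (-α)
          ≤ ∫ y in (Set.Ico (0 : ℝ) π ×ˢ Set.Ico (0 : ℝ) π) \
                (Set.Icc (0 : ℝ) (M * Real.sqrt δ) ×ˢ Set.Icc (0 : ℝ) (M * Real.sqrt δ)),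
              y.1 * y.2 * (Real.sqrt (y.1 ^ 2 + y.2 ^ 2)) ^ (-4 - 2 * α) * ω y := by
  refine ⟨4, by norm_num, 3/131072, by norm_num, 1/200, by norm_num, ?_⟩
  intro δ hδ ω hωm hω01 hbad
  obtain ⟨hδ0, hδs⟩ := hδ
  have hsδ : 0 < Real.sqrt δ := Real.sqrt_pos.2 hδ0
  have hδδ : Real.sqrt δ * Real.sqrt δ = δ := Real.mul_self_sqrt hδ0.le
  set a : ℝ := 4 * Real.sqrt δ with ha
  have ha0 : 0 < a := by positivity
  have hsd14 : Real.sqrt δ ≤ 1/14 := by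
    have h := Real.sqrt_le_sqrt (show δ ≤ 1/196 by linarith)
    rwa [show (1/196:ℝ) = (1/14)^2 by norm_num, Real.sqrt_sq (by norm_num)] at h
  have h2a : 2 * a < π := by
    have := Real.pi_gt_three
    rw [ha]; nlinarith
  have haa : a * a = 16 * δ := by rw [ha]; nlinarith
  set e : ℝ := -4 - 2 * α with he
  have he0 : e ≤ 0 := by rw [he]; linarith
  set sq : Set (ℝ×ℝ) := Set.Ico (0:ℝ) π ×ˢ Set.Ico (0:ℝ) π with hsq
  set S : Set (ℝ×ℝ) := sq \ (Set.Icc (0:ℝ) a ×ˢ Set.Icc (0:ℝ) a) with hS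
  set R : Set (ℝ×ℝ) := Set.Ioc a (2*a) ×ˢ Set.Ioc a (2*a) with hR
  set good : Set (ℝ×ℝ) := {y | ω y = 1} with hgood
  set f : ℝ×ℝ → ℝ := fun y => y.1 * y.2 * (Real.sqrt (y.1^2+y.2^2)) ^ e * ω y with hf
  have hSsub : S ⊆ sq := by rw [hS]; exact Set.diff_subset
  have hRsub : R ⊆ S := by
    intro y hy
    obtain ⟨h1, h2⟩ := hy
    refine ⟨⟨⟨le_trans ha0.le h1.1.le, lt_of_le_of_lt h1.2 h2a⟩,
      ⟨le_trans ha0.le h2.1.le, lt_of_le_of_lt h2.2 h2a⟩⟩, ?_⟩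
    intro hc
    exact absurd hc.1.2 (not_le.2 h1.1)
  have mS : MeasurableSet S :=
    (measurableSet_Ico.prod measurableSet_Ico).diff (measurableSet_Icc.prod measurableSet_Icc)
  have mR : MeasurableSet R := measurableSet_Ioc.prod measurableSet_Ioc
  have mgood : MeasurableSet good := hωm (measurableSet_singleton 1)
  have hfm : Measurable f := by rw [hf]; fun_prop
  have hfnn : ∀ y ∈ sq, 0 ≤ f y := by
    intro y hy
    have h0 := (hω01 y hy).1
    have h1 : (0:ℝ) ≤ y.1 := hy.1.1
    have h2 : (0:ℝ) ≤ y.2 := hy.2.1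
    exact mul_nonneg (mul_nonneg (mul_nonneg h1 h2)
      (Real.rpow_nonneg (Real.sqrt_nonneg _) e)) h0
  -- volumes
  have hvolsq : volume sq < ⊤ := by
    rw [hsq, Measure.volume_eq_prod, Measure.prod_prod, Real.volume_Ico]
    exact ENNReal.mul_lt_top ENNReal.ofReal_lt_top ENNReal.ofReal_lt_top
  have hvolS : volume S < ⊤ := lt_of_le_of_lt (measure_mono hSsub) hvolsq
  have hvolR : volume R = ENNReal.ofReal (16 * δ) := by
    rw [hR, Measure.volume_eq_prod, Measure.prod_prod, Real.volume_Ioc,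
      ← ENNReal.ofReal_mul (by linarith)]
    congr 1
    nlinarith
  -- integrability of f on S
  have hbound : ∀ y ∈ S, ‖f y‖ ≤ π^2 * a ^ e := by
    intro y hy
    have hysq := hSsub hy
    have hy1 : (0:ℝ) ≤ y.1 := hysq.1.1
    have hy1' : y.1 < π := hysq.1.2
    have hy2 : (0:ℝ) ≤ y.2 := hysq.2.1
    have hy2' : y.2 < π := hysq.2.2
    have hω := hω01 y hysq
    have hnotin : y ∉ (Set.Icc (0:ℝ) a ×ˢ Set.Icc (0:ℝ) a) := hy.2
    have hmax : a < y.1 ∨ a < y.2 := by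
      by_contra hcon
      push_neg at hcon
      exact hnotin ⟨⟨hy1, hcon.1⟩, ⟨hy2, hcon.2⟩⟩
    have hr : a ≤ Real.sqrt (y.1^2 + y.2^2) := by
      rw [show a = Real.sqrt (a^2) from (Real.sqrt_sq ha0.le).symm]
      apply Real.sqrt_le_sqrt
      rcases hmax with h | h
      · nlinarith
      · nlinarith
    have hre : Real.sqrt (y.1^2+y.2^2) ^ e ≤ a ^ e :=
      Real.rpow_le_rpow_of_nonpos ha0 hr he0
    have hre0 : 0 ≤ Real.sqrt (y.1^2+y.2^2) ^ e :=
      Real.rpow_nonneg (Real.sqrt_nonneg _) e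
    rw [Real.norm_eq_abs, abs_of_nonneg (hfnn y hysq), hf]
    have hπ0 : (0:ℝ) < π := Real.pi_pos
    calc y.1 * y.2 * Real.sqrt (y.1^2+y.2^2) ^ e * ω y
        ≤ y.1 * y.2 * Real.sqrt (y.1^2+y.2^2) ^ e * 1 := by
          apply mul_le_mul_of_nonneg_left hω.2
          exact mul_nonneg (mul_nonneg hy1 hy2) hre0
      _ = (y.1 * y.2) * Real.sqrt (y.1^2+y.2^2) ^ e := by ring
      _ ≤ (π * π) * a ^ e := by
          apply mul_le_mul (by nlinarith) hre hre0 (by positivity)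
      _ = π^2 * a ^ e := by ring
  have hiS : IntegrableOn f S := by
    refine ⟨hfm.aestronglyMeasurable, HasFiniteIntegral.restrict_of_bounded (C := π^2 * a ^ e) hvolS ?_⟩
    filter_upwards [ae_restrict_mem mS] with y hy using hbound y hy
  have hiR : IntegrableOn f R := hiS.mono_set hRsub
  -- the constants
  set B : ℝ := Real.sqrt (8 * a^2) with hBdef
  have hB0 : 0 < B := Real.sqrt_pos.2 (by positivity)
  have hB2 : B^2 = 128 * δ := by
    rw [hBdef, Real.sq_sqrt (by positivity)]
    nlinarith
  set gmin : ℝ := a^2 * B ^ e with hgmin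
  -- pointwise bound on R
  have hpt : ∀ y ∈ R, good.indicator (fun _ => gmin) y ≤ f y := by
    intro y hy
    obtain ⟨h1, h2⟩ := hy
    by_cases hg : y ∈ good
    · rw [Set.indicator_of_mem hg]
      have hω1 : ω y = 1 := hg
      have hr_le : Real.sqrt (y.1^2 + y.2^2) ≤ B := by
        rw [hBdef]
        apply Real.sqrt_le_sqrt
        nlinarith [h1.1, h1.2, h2.1, h2.2]
      have hrpos : 0 < Real.sqrt (y.1^2+y.2^2) := Real.sqrt_pos.2 (by nlinarith [h1.1])
      have hre : B ^ e ≤ Real.sqrt (y.1^2+y.2^2) ^ e :=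
        Real.rpow_le_rpow_of_nonpos hrpos hr_le he0
      have hBe : 0 ≤ B ^ e := Real.rpow_nonneg hB0.le e
      rw [hgmin, hf]
      simp only [hω1, mul_one]
      calc a^2 * B^e ≤ (y.1*y.2) * Real.sqrt (y.1^2+y.2^2) ^ e := by
            apply mul_le_mul (by nlinarith [h1.1, h2.1]) hre hBe (by nlinarith [h1.1, h2.1])
        _ = y.1 * y.2 * Real.sqrt (y.1^2+y.2^2) ^ e := by ring
    · rw [Set.indicator_of_notMem hg]
      exact hfnn y (hSsub (hRsub ⟨h1, h2⟩))
  have hiInd : IntegrableOn (good.indicator fun _ => gmin) R :=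
    (integrableOn_const (by rw [hvolR]; exact ENNReal.ofReal_ne_top)).indicator mgood
  have key1 : ∫ y in R, good.indicator (fun _ => gmin) y ≤ ∫ y in R, f y :=
    setIntegral_mono_on hiInd hiR mR hpt
  have key2 : ∫ y in R, f y ≤ ∫ y in S, f y := by
    refine setIntegral_mono_set hiS ?_ (HasSubset.Subset.eventuallyLE hRsub)
    filter_upwards [ae_restrict_mem mS] with y hy using hfnn y (hSsub hy)
  have key3 : ∫ y in R, good.indicator (fun _ => gmin) y
      = (volume (R ∩ good)).toReal * gmin := by
    rw [setIntegral_indicator mgood, setIntegral_const, smul_eq_mul]; rfl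
  -- measure lower bound
  have hdiff_le : volume (R \ good) ≤ ENNReal.ofReal (4*π*δ) := by
    refine le_trans (measure_mono ?_) hbad
    intro y hy
    exact ⟨hSsub (hRsub hy.1), hy.2⟩
  have hsplit := measure_inter_add_diff (μ := volume) R mgood
  have hint_lb : ENNReal.ofReal (3*δ) ≤ volume (R ∩ good) := by
    have h1 : volume R ≤ volume (R ∩ good) + ENNReal.ofReal (4*π*δ) := by
      rw [← hsplit]; exact add_le_add le_rfl hdiff_le
    rw [hvolR] at h1
    have h2 : ENNReal.ofReal (16*δ) - ENNReal.ofReal (4*π*δ) ≤ volume (R ∩ good) :=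
      tsub_le_iff_right.2 h1
    refine le_trans ?_ h2
    rw [← ENNReal.ofReal_sub _ (by positivity)]
    exact ENNReal.ofReal_le_ofReal (by nlinarith [Real.pi_lt_d2])
  have hfin : volume (R ∩ good) ≠ ⊤ := by
    refine ne_top_of_le_ne_top ?_ (measure_mono Set.inter_subset_left)
    rw [hvolR]; exact ENNReal.ofReal_ne_top
  have key4 : 3*δ ≤ (volume (R ∩ good)).toReal :=
    (ENNReal.ofReal_le_iff_le_toReal hfin).1 hint_lb
  -- gmin lower bound
  have hδa : 0 < δ ^ (-α) := Real.rpow_pos_of_pos hδ0 _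
  have hBe : B ^ e = (128*δ) ^ (-2 - α) := by
    rw [he, show (-4 - 2*α : ℝ) = 2 * (-2 - α) by ring, Real.rpow_mul hB0.le,
      show (2:ℝ) = ((2:ℕ):ℝ) by norm_num, Real.rpow_natCast, hB2]
  have h128 : (0:ℝ) < 128 * δ := by linarith
  have hsplit2 : (128*δ) ^ (-2 - α) = (128*δ)^(-2:ℝ) * (128*δ)^(-α) := by
    rw [← Real.rpow_add h128]; ring_nf
  have hneg2 : (128*δ)^(-2:ℝ) = ((128*δ)^2)⁻¹ := by
    rw [show (-2:ℝ) = -((2:ℕ):ℝ) by norm_num, Real.rpow_neg h128.le, Real.rpow_natCast]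
  have hmulr : (128*δ)^(-α) = (128:ℝ)^(-α) * δ^(-α) := Real.mul_rpow (by norm_num) hδ0.le
  have h128a : (128:ℝ)⁻¹ ≤ (128:ℝ)^(-α) := by
    have h := Real.rpow_le_rpow_of_exponent_le (show (1:ℝ) ≤ 128 by norm_num)
      (show -1 ≤ -α by linarith)
    rwa [Real.rpow_neg_one] at h
  have hgmin_eq : gmin = (δ⁻¹/1024) * ((128:ℝ)^(-α) * δ^(-α)) := by
    rw [hgmin, hBe, hsplit2, hneg2, hmulr, show a^2 = 16*δ by nlinarith]
    field_simp
    ring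
  have key5 : δ^(-α) * δ⁻¹ / 131072 ≤ gmin := by
    rw [hgmin_eq]
    have h1 : (128:ℝ)⁻¹ * δ^(-α) ≤ (128:ℝ)^(-α) * δ^(-α) :=
      mul_le_mul_of_nonneg_right h128a hδa.le
    have h2 : (0:ℝ) ≤ δ⁻¹/1024 := by positivity
    calc δ^(-α) * δ⁻¹ / 131072 = (δ⁻¹/1024) * ((128:ℝ)⁻¹ * δ^(-α)) := by ring
      _ ≤ (δ⁻¹/1024) * ((128:ℝ)^(-α) * δ^(-α)) := mul_le_mul_of_nonneg_left h1 h2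
  -- assemble
  calc (3:ℝ)/131072 * δ^(-α)
      = (3*δ) * (δ^(-α) * δ⁻¹ / 131072) := by field_simp
    _ ≤ (volume (R ∩ good)).toReal * gmin :=
        mul_le_mul key4 key5 (by positivity) ENNReal.toReal_nonneg
    _ = ∫ y in R, good.indicator (fun _ => gmin) y := key3.symm
    _ ≤ ∫ y in R, f y := key1
    _ ≤ ∫ y in S, f y := key2
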